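/- Let E be a locally convex space. A subset U of E is c^∞-open (open in the Mackey-closure topology) if and only if for every point x ∈ U and every sequence (x_n) in E that Mackey-converges to x, there exists N ∈ ℕ such that x_n ∈ U for all n ≥ N. -/

import Mathlib

open Filter Topology Set Bornology Pointwise

universe u v

/-- Gâteaux derivative of `Φ` at `x` in direction `v`, with value `w`. -/
def HasGDerivAt {E : Type u} {F : Type v} [AddCommGroup E] [Module ℝ E]
    [AddCommGroup F] [Module ℝ F] [TopologicalSpace F]
    (Φ : E → F) (x v : E) (w : F) : Prop :=
  Tendsto (fun t : ℝ => t⁻¹ • (Φ (x + t • v) - Φ x)) (𝓝[≠] (0 : ℝ)) (𝓝 w)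

/-- Derivative of a curve `c : ℝ → E` at `t`, with value `v`. -/
def CurveDerivAt {E : Type u} [AddCommGroup E] [Module ℝ E] [TopologicalSpace E]
    (c : ℝ → E) (v : E) (t : ℝ) : Prop :=
  Tendsto (fun h : ℝ => h⁻¹ • (c (t + h) - c t)) (𝓝[≠] (0 : ℝ)) (𝓝 v)

/-- The curve `c` is of class `C^k`: derivatives up to order `k` exist and are continuous. -/
def IsCkCurve {E : Type u} [AddCommGroup E] [Module ℝ E] [TopologicalSpace E]
    (k : ℕ) (c : ℝ → E) : Prop :=
  ∃ D : ℕ → ℝ → E, D 0 = c ∧ (∀ n < k, ∀ t, CurveDerivAt (D n) (D (n + 1) t) t) ∧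
    ∀ n ≤ k, Continuous (D n)

/-- The curve `c` is smooth (`C^∞`): all iterated derivatives exist and are continuous. -/
def IsSmoothCurve {E : Type u} [AddCommGroup E] [Module ℝ E] [TopologicalSpace E]
    (c : ℝ → E) : Prop :=
  ∃ D : ℕ → ℝ → E, D 0 = c ∧ (∀ n, ∀ t, CurveDerivAt (D n) (D (n + 1) t) t) ∧
    ∀ n, Continuous (D n)

/-- The set of difference quotients of `c` over `J`. -/
def DiffQuotients {E : Type u} [AddCommGroup E] [Module ℝ E]
    (c : ℝ → E) (J : Set ℝ) : Set E :=
  {x | ∃ t₁ ∈ J, ∃ t₂ ∈ J, t₁ ≠ t₂ ∧ x = (t₂ - t₁)⁻¹ • (c t₂ - c t₁)}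

/-- `c` is Lipschitz on `J`: its set of difference quotients over `J` is bounded. -/
def LipschitzOnSet {E : Type u} [AddCommGroup E] [Module ℝ E] [TopologicalSpace E]
    (c : ℝ → E) (J : Set ℝ) : Prop :=
  IsVonNBounded ℝ (DiffQuotients c J)

/-- `c` is locally Lipschitz: every real has a neighborhood on which `c` is Lipschitz. -/
def LocallyLipschitzCurve {E : Type u} [AddCommGroup E] [Module ℝ E] [TopologicalSpace E]
    (c : ℝ → E) : Prop :=
  ∀ t : ℝ, ∃ J ∈ 𝓝 t, LipschitzOnSet c J

/-- `c` is of class `Lip^k`: derivatives up to order `k` exist and the `k`-th one is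
locally Lipschitz. -/
def IsLipkCurve {E : Type u} [AddCommGroup E] [Module ℝ E] [TopologicalSpace E]
    (k : ℕ) (c : ℝ → E) : Prop :=
  ∃ D : ℕ → ℝ → E, D 0 = c ∧ (∀ n < k, ∀ t, CurveDerivAt (D n) (D (n + 1) t) t) ∧
    LocallyLipschitzCurve (D k)

/-- A set is absolutely convex if it is convex and balanced. -/
def AbsolutelyConvex {E : Type u} [AddCommGroup E] [Module ℝ E] (B : Set E) : Prop :=
  Convex ℝ B ∧ Balanced ℝ B

/-- A sequence `x` Mackey-converges to `l`. -/
def MackeyConvSeq {E : Type u} [AddCommGroup E] [Module ℝ E] [TopologicalSpace E]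
    (x : ℕ → E) (l : E) : Prop :=
  ∃ B : Set E, AbsolutelyConvex B ∧ IsVonNBounded ℝ B ∧
    ∃ μ : ℕ → ℝ, Tendsto μ atTop (𝓝 (0 : ℝ)) ∧ ∀ n, x n - l ∈ μ n • B

/-- `E` is Mackey-complete: every Mackey-Cauchy net converges. -/
def MackeyComplete (E : Type u) [AddCommGroup E] [Module ℝ E] [TopologicalSpace E] : Prop :=
  ∀ (ι : Type) [Nonempty ι] [SemilatticeSup ι] (x : ι → E),
    (∃ B : Set E, AbsolutelyConvex B ∧ IsVonNBounded ℝ B ∧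
      ∃ μ : ι × ι → ℝ, Tendsto μ atTop (𝓝 (0 : ℝ)) ∧ ∀ i j, x i - x j ∈ μ (i, j) • B) →
    ∃ l, Tendsto x atTop (𝓝 l)

/-- The Mackey-closure (`c^∞`) topology: the finest topology on `E` making all smooth
curves `ℝ → E` continuous. -/
def cInfTopology (E : Type u) [AddCommGroup E] [Module ℝ E] [TopologicalSpace E] :
    TopologicalSpace E :=
  ⨆ c : {c : ℝ → E // IsSmoothCurve c}, TopologicalSpace.coinduced c.1 inferInstance

/-- `Φ` is conveniently smooth on `U`: it sends smooth curves into `U` to smooth curves. -/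
def ConvSmoothOn {E : Type u} {F : Type v} [AddCommGroup E] [Module ℝ E] [TopologicalSpace E]
    [AddCommGroup F] [Module ℝ F] [TopologicalSpace F]
    (Φ : E → F) (U : Set E) : Prop :=
  ∀ c : ℝ → E, IsSmoothCurve c → (∀ t, c t ∈ U) → IsSmoothCurve (Φ ∘ c)

/-- Bastiani `C^k` maps: `C^0` means continuous on `U`; `C^{k+1}` means the Gâteaux
differential exists on `U × E` and is `C^k` there. -/
def IsCBastOn (F : Type v) [AddCommGroup F] [Module ℝ F] [TopologicalSpace F] :
    (k : ℕ) → (E : Type u) → [AddCommGroup E] → [Module ℝ E] → [TopologicalSpace E] →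
      (E → F) → Set E → Prop
  | 0, _, _, _, _, Φ, U => ContinuousOn Φ U
  | k + 1, E, iA, iM, iT, Φ, U =>
      letI : AddCommGroup E := iA
      letI : Module ℝ E := iM
      letI : TopologicalSpace E := iT
      ∃ D : E × E → F, (∀ x ∈ U, ∀ v, HasGDerivAt Φ x v (D (x, v))) ∧
        IsCBastOn F k (E × E) D (U ×ˢ (Set.univ : Set E))

/-- `Φ` is smooth on `U` in the sense of Bastiani. -/
def BastSmoothOn {E : Type u} {F : Type v} [AddCommGroup E] [Module ℝ E] [TopologicalSpace E]
    [AddCommGroup F] [Module ℝ F] [TopologicalSpace F]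
    (Φ : E → F) (U : Set E) : Prop :=
  ∀ k : ℕ, IsCBastOn F k E Φ U

/-- The absolutely convex hull of the closure of `A`. -/
def absConvexHullOfClosure {E : Type u} [AddCommGroup E] [Module ℝ E] [TopologicalSpace E]
    (A : Set E) : Set E :=
  ⋂₀ {t | closure A ⊆ t ∧ AbsolutelyConvex t}

/-! ### Auxiliary material for the proof -/

section CInfBasic

variable {E : Type*} [AddCommGroup E] [Module ℝ E] [TopologicalSpace E]

lemma isOpen_cInfTopology_iff (U : Set E) :
    @IsOpen E (cInfTopology E) U ↔ ∀ c : ℝ → E, IsSmoothCurve c → IsOpen (c ⁻¹' U) := by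
  have h : @IsOpen E (cInfTopology E) U ↔
      @IsOpen E (⨆ c : {c : ℝ → E // IsSmoothCurve c},
        TopologicalSpace.coinduced c.1 inferInstance) U := Iff.rfl
  rw [h, isOpen_iSup_iff]
  constructor
  · intro hh c hc
    exact isOpen_coinduced.mp (hh ⟨c, hc⟩)
  · intro hh c
    exact isOpen_coinduced.mpr (hh c.1 c.2)

end CInfBasic

section GeneralTVS

variable {E : Type*} [AddCommGroup E] [Module ℝ E] [TopologicalSpace E]
  [IsTopologicalAddGroup E] [ContinuousSMul ℝ E]

lemma curveDerivAt_congr_nhds {c₁ c₂ : ℝ → E} {v : E} {t : ℝ}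
    (h : c₁ =ᶠ[𝓝 t] c₂) (hd : CurveDerivAt c₁ v t) : CurveDerivAt c₂ v t := by
  have hmap : Tendsto (fun u : ℝ => t + u) (𝓝 0) (𝓝 t) := by
    exact (continuous_add_left t).tendsto' (0 : ℝ) t (by simp)
  have h' : ∀ᶠ u in 𝓝 (0 : ℝ), c₁ (t + u) = c₂ (t + u) := hmap.eventually h
  have hc : c₁ t = c₂ t := h.eq_of_nhds
  refine hd.congr' ?_
  filter_upwards [h'.filter_mono nhdsWithin_le_nhds] with u hu
  rw [hu, hc]

lemma curveDerivAt_const (b : E) (t : ℝ) : CurveDerivAt (fun _ => b) 0 t := by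
  have : (fun h : ℝ => h⁻¹ • ((fun _ : ℝ => b) (t + h) - (fun _ : ℝ => b) t))
      = fun _ => (0 : E) := by
    funext h; simp
  show Tendsto _ _ _
  rw [this]
  exact tendsto_const_nhds

lemma curveDerivAt_const_add_smul {F : ℝ → ℝ} {a : ℝ} {t : ℝ} (hF : HasDerivAt F a t)
    (b v : E) : CurveDerivAt (fun s => b + F s • v) (a • v) t := by
  have h1 : Tendsto (fun h : ℝ => h⁻¹ * (F (t + h) - F t)) (𝓝[≠] (0:ℝ)) (𝓝 a) := by
    simpa [smul_eq_mul] using hasDerivAt_iff_tendsto_slope_zero.mp hF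
  show Tendsto _ _ _
  refine (h1.smul_const v).congr fun h => ?_
  show (h⁻¹ * (F (t + h) - F t)) • v = h⁻¹ • ((b + F (t + h) • v) - (b + F t • v))
  rw [add_sub_add_left_eq_sub, ← sub_smul, smul_smul]

/-- Master smallness lemma: a function which near `0` takes values in small multiples of a
bounded balanced set tends to `0` along `𝓝[≠] 0`. -/
lemma tendsto_nhdsWithin_zero_of_small {B : Set E} (hB : IsVonNBounded ℝ B)
    (hbal : Balanced ℝ B) {r : ℕ → ℝ} (hr : Tendsto r atTop (𝓝 (0:ℝ))) {g : ℝ → E}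
    (hg : ∀ t : ℝ, t ≠ 0 → |t| < 1 → g t = 0 ∨
      ∃ n : ℕ, ((2:ℝ) ^ n)⁻¹ ≤ |t| ∧ ∃ a : ℝ, |a| ≤ |r n| ∧ g t ∈ a • B) :
    Tendsto g (𝓝[≠] (0:ℝ)) (𝓝 (0:E)) := by
  rw [(nhds_basis_balanced ℝ E).tendsto_right_iff]
  rintro W ⟨hW0, hWbal⟩
  obtain ⟨ρ, hρ⟩ := absorbs_iff_norm.mp (hB hW0)
  set C : ℝ := max ρ 1 with hC
  have hC0 : 0 < C := lt_of_lt_of_le one_pos (le_max_right _ _)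
  have hBC : B ⊆ C • W := hρ C (by rw [Real.norm_eq_abs, abs_of_pos hC0]; exact le_max_left _ _)
  obtain ⟨N, hN⟩ := Metric.tendsto_atTop.mp hr C⁻¹ (by positivity)
  set δ : ℝ := min (((2:ℝ) ^ (N+1))⁻¹) 1 with hδ
  have hδ0 : 0 < δ := lt_min (by positivity) one_pos
  have h1 : ∀ᶠ t in 𝓝[≠] (0:ℝ), |t| < δ := by
    have := eventually_abs_sub_lt (0:ℝ) hδ0
    simp only [sub_zero] at this
    exact this.filter_mono nhdsWithin_le_nhds
  have h2 : ∀ᶠ t in 𝓝[≠] (0:ℝ), t ≠ 0 := eventually_mem_nhdsWithin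
  filter_upwards [h1, h2] with t htδ ht0
  rcases hg t ht0 (lt_of_lt_of_le htδ (min_le_right _ _)) with h | ⟨n, hn2, a, ha, hmem⟩
  · rw [h]; exact mem_of_mem_nhds hW0
  · have hnN : N ≤ n := by
      by_contra hcon
      push_neg at hcon
      have h4 : ((2:ℝ)^n)⁻¹ < ((2:ℝ)^(N+1))⁻¹ :=
        lt_of_le_of_lt hn2 (lt_of_lt_of_le htδ (min_le_left _ _))
      have h5 : (2:ℝ)^n ≤ (2:ℝ)^(N+1) := pow_le_pow_right₀ one_le_two (by omega)
      have h6 : ((2:ℝ)^(N+1))⁻¹ ≤ ((2:ℝ)^n)⁻¹ := by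
        apply inv_anti₀ (by positivity) h5
      linarith
    have h7 : |r n| < C⁻¹ := by
      have := hN n hnN; rwa [Real.dist_eq, sub_zero] at this
    have hmem2 : g t ∈ (a * C) • W := by
      obtain ⟨u, hu, hgt⟩ := hmem
      obtain ⟨w, hw, hCw⟩ := hBC hu
      rw [← hgt, ← hCw]
      show a • C • w ∈ (a * C) • W
      rw [smul_smul]
      exact smul_mem_smul_set hw
    have hac : ‖a * C‖ ≤ 1 := by
      rw [Real.norm_eq_abs, abs_mul, abs_of_pos hC0]
      calc |a| * C ≤ C⁻¹ * C := by
            apply mul_le_mul_of_nonneg_right _ hC0.le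
            exact ha.trans h7.le
        _ = 1 := inv_mul_cancel₀ hC0.ne'
    exact hWbal _ hac hmem2

lemma isVonNBounded_of_isCompact {K : Set E} (hK : IsCompact K) : IsVonNBounded ℝ K := by
  letI : UniformSpace E := IsTopologicalAddGroup.rightUniformSpace E
  haveI : IsUniformAddGroup E := isUniformAddGroup_of_addCommGroup
  exact hK.totallyBounded.isVonNBounded ℝ

lemma vonNBounded_closure {A : Set E} (hA : IsVonNBounded ℝ A) :
    IsVonNBounded ℝ (closure A) := by
  intro V hV
  obtain ⟨W, hW0, hWc, hWV⟩ := exists_mem_nhds_isClosed_subset hV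
  obtain ⟨ρ, hρ⟩ := absorbs_iff_norm.mp (hA hW0)
  refine absorbs_iff_norm.mpr ⟨max ρ 1, fun c hc => ?_⟩
  have hc0 : c ≠ 0 := by
    intro h
    rw [h, norm_zero] at hc
    have := le_max_right ρ 1
    linarith
  have h1 : A ⊆ c • W := hρ c (le_trans (le_max_left _ _) hc)
  have h2 : IsClosed (c • W) := hWc.smul_of_ne_zero hc0
  calc closure A ⊆ c • W := h2.closure_subset_iff.mpr h1
    _ ⊆ c • V := smul_set_mono hWV

lemma exists_absconvex_nhds [LocallyConvexSpace ℝ E] {V : Set E} (hV : V ∈ 𝓝 (0:E)) :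
    ∃ W ∈ 𝓝 (0:E), Balanced ℝ W ∧ Convex ℝ W ∧ W ⊆ V := by
  obtain ⟨C, ⟨hC0, hCconv⟩, hCV⟩ := (LocallyConvexSpace.convex_basis_zero ℝ E).mem_iff.mp hV
  exact ⟨convexHull ℝ (balancedCore ℝ C),
    Filter.mem_of_superset (balancedCore_mem_nhds_zero hC0) (subset_convexHull ℝ _),
    (balancedCore_balanced C).convexHull, convex_convexHull ℝ _,
    (convexHull_min (balancedCore_subset C) hCconv).trans hCV⟩

lemma vonNBounded_absConvexHull [LocallyConvexSpace ℝ E] {A : Set E}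
    (hA : IsVonNBounded ℝ A) : IsVonNBounded ℝ (absConvexHull ℝ A) := by
  intro V hV
  obtain ⟨W, hW0, hWbal, hWconv, hWV⟩ := exists_absconvex_nhds hV
  obtain ⟨ρ, hρ⟩ := absorbs_iff_norm.mp (hA hW0)
  refine absorbs_iff_norm.mpr ⟨max ρ 1, fun c hc => ?_⟩
  have h1 : A ⊆ c • W := hρ c ((le_max_left _ _).trans hc)
  have hbal2 : Balanced ℝ (c • W) := by
    intro a ha z hz
    obtain ⟨u, hu, hz'⟩ := hz
    obtain ⟨w, hw, hu'⟩ := hu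
    rw [← hz', ← hu']
    show a • c • w ∈ c • W
    rw [smul_comm]
    exact smul_mem_smul_set (hWbal a ha (smul_mem_smul_set hw))
  have h2 : AbsConvex ℝ (c • W) := ⟨hbal2, hWconv.smul c⟩
  exact (absConvexHull_min h1 h2).trans (smul_set_mono hWV)

end GeneralTVS
section BumpMachinery

/-- A fixed smooth bump function supported in `(5/4, 7/4)` with value `1` at `3/2`. -/
noncomputable def bumpData : ContDiffBump ((3:ℝ)/2) :=
  ⟨1/8, 1/4, by norm_num, by norm_num⟩

noncomputable def bumpFn : ℝ → ℝ := ⇑bumpData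

lemma bump_contDiff : ContDiff ℝ (⊤ : ℕ∞) bumpFn := bumpData.contDiff

lemma bump_one : bumpFn ((3:ℝ)/2) = 1 :=
  bumpData.one_of_mem_closedBall (Metric.mem_closedBall_self bumpData.rIn_pos.le)

lemma bump_zero {t : ℝ} (h : t ≤ 5/4 ∨ 7/4 ≤ t) : bumpFn t = 0 := by
  apply bumpData.zero_of_le_dist
  have hrOut : bumpData.rOut = 1/4 := rfl
  rw [hrOut, Real.dist_eq]
  rcases h with h | h
  · rw [abs_sub_comm, abs_of_nonneg (by linarith)]
    linarith
  · rw [abs_of_nonneg (by linarith)]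
    linarith

/-- Iterated derivatives of the bump function. -/
noncomputable def ψFn (j : ℕ) : ℝ → ℝ := iteratedDeriv j bumpFn

lemma ψ_cont (j : ℕ) : Continuous (ψFn j) :=
  (contDiff_iff_iteratedDeriv.mp bump_contDiff).1 j le_top

lemma ψ_diff (j : ℕ) : Differentiable ℝ (ψFn j) :=
  (contDiff_iff_iteratedDeriv.mp bump_contDiff).2 j
    (lt_of_le_of_ne le_top (by simp))

lemma ψ_hasDerivAt (j : ℕ) (t : ℝ) : HasDerivAt (ψFn j) (ψFn (j+1) t) t := by
  have h2 : ψFn (j+1) t = deriv (ψFn j) t := by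
    show iteratedDeriv (j+1) bumpFn t = deriv (iteratedDeriv j bumpFn) t
    rw [iteratedDeriv_succ]
  rw [h2]
  exact ((ψ_diff j) t).hasDerivAt

lemma ψ_zero : ∀ j : ℕ, ∀ t : ℝ, (t ≤ 5/4 ∨ 7/4 ≤ t) → ψFn j t = 0 := by
  intro j
  induction j with
  | zero =>
    intro t ht
    show iteratedDeriv 0 bumpFn t = 0
    rw [iteratedDeriv_zero]
    exact bump_zero ht
  | succ j ih =>
    have hopen : ∀ t : ℝ, (t < 5/4 ∨ 7/4 < t) → ψFn (j+1) t = 0 := by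
      intro t ht
      have hev : ψFn j =ᶠ[𝓝 t] fun _ => (0:ℝ) := by
        rcases ht with ht | ht
        · filter_upwards [Iio_mem_nhds ht] with s hs
          exact ih s (Or.inl hs.le)
        · filter_upwards [Ioi_mem_nhds ht] with s hs
          exact ih s (Or.inr hs.le)
      have : ψFn (j+1) t = deriv (ψFn j) t := by
        show iteratedDeriv (j+1) bumpFn t = deriv (iteratedDeriv j bumpFn) t
        rw [iteratedDeriv_succ]
      rw [this, hev.deriv_eq, deriv_const]
    intro t ht
    rcases ht with ht | ht
    · have hcl : Set.EqOn (ψFn (j+1)) (fun _ => (0:ℝ)) (closure (Iio ((5:ℝ)/4))) :=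
        Set.EqOn.closure (fun s hs => hopen s (Or.inl hs)) (ψ_cont (j+1)) continuous_const
      exact hcl (by rw [closure_Iio]; exact ht)
    · have hcl : Set.EqOn (ψFn (j+1)) (fun _ => (0:ℝ)) (closure (Ioi ((7:ℝ)/4))) :=
        Set.EqOn.closure (fun s hs => hopen s (Or.inr hs)) (ψ_cont (j+1)) continuous_const
      exact hcl (by rw [closure_Ioi]; exact ht)

lemma ψ_bound (j : ℕ) : ∃ M : ℝ, 0 ≤ M ∧ ∀ t, |ψFn j t| ≤ M := by
  obtain ⟨C, hC⟩ := (isCompact_Icc (a := (5:ℝ)/4) (b := 7/4)).exists_bound_of_continuousOn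
    (ψ_cont j).continuousOn
  refine ⟨max C 0, le_max_right _ _, fun t => ?_⟩
  by_cases ht : t ∈ Icc ((5:ℝ)/4) (7/4)
  · exact le_trans (by simpa [Real.norm_eq_abs] using hC t ht) (le_max_left _ _)
  · have ht' : t ≤ 5/4 ∨ 7/4 ≤ t := by
      rcases lt_or_ge t (5/4 : ℝ) with h | h
      · exact Or.inl h.le
      · right
        by_contra hcon
        push_neg at hcon
        exact ht ⟨h, hcon.le⟩
    rw [ψ_zero j t ht', abs_zero]
    exact le_max_right _ _

noncomputable def Mψ (j : ℕ) : ℝ := (ψ_bound j).choose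

lemma Mψ_nonneg (j : ℕ) : 0 ≤ Mψ j := (ψ_bound j).choose_spec.1

lemma Mψ_spec (j : ℕ) (t : ℝ) : |ψFn j t| ≤ Mψ j := (ψ_bound j).choose_spec.2 t

/-- The scalar coefficient functions: rescaled bumps and their derivatives. -/
noncomputable def scalFn (j m : ℕ) (t : ℝ) : ℝ := 2 ^ (m * j) * ψFn j (2 ^ m * t)

lemma scalFn_cont (j m : ℕ) : Continuous (scalFn j m) :=
  continuous_const.mul ((ψ_cont j).comp (continuous_const.mul continuous_id))

lemma scalFn_hasDerivAt (j m : ℕ) (t : ℝ) :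
    HasDerivAt (scalFn j m) (scalFn (j+1) m t) t := by
  have h1 : HasDerivAt (fun s : ℝ => (2:ℝ)^m * s) ((2:ℝ)^m) t := by
    simpa using (hasDerivAt_id t).const_mul ((2:ℝ)^m)
  have h2 := (ψ_hasDerivAt j ((2:ℝ)^m * t)).comp t h1
  have h3 := h2.const_mul ((2:ℝ)^(m*j))
  have heq : (2:ℝ)^(m*(j+1)) * ψFn (j+1) ((2:ℝ)^m * t)
      = (2:ℝ)^(m*j) * (ψFn (j+1) ((2:ℝ)^m * t) * (2:ℝ)^m) := by
    rw [show m*(j+1) = m*j + m from by ring, pow_add]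
    ring
  show HasDerivAt (fun t => (2:ℝ)^(m*j) * ψFn j ((2:ℝ)^m * t)) ((2:ℝ)^(m*(j+1)) * ψFn (j+1) ((2:ℝ)^m * t)) t
  rw [heq]
  exact h3

lemma scalFn_bound (j m : ℕ) (t : ℝ) : |scalFn j m t| ≤ (2:ℝ)^(m*j) * Mψ j := by
  show |(2:ℝ)^(m*j) * ψFn j ((2:ℝ)^m * t)| ≤ _
  rw [abs_mul, abs_of_pos (by positivity : (0:ℝ) < 2^(m*j))]
  exact mul_le_mul_of_nonneg_left (Mψ_spec j _) (by positivity)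

lemma scalFn_vanish {j m : ℕ} {t : ℝ}
    (h : (2:ℝ)^m * t ≤ 5/4 ∨ 7/4 ≤ (2:ℝ)^m * t) : scalFn j m t = 0 := by
  show (2:ℝ)^(m*j) * ψFn j ((2:ℝ)^m * t) = 0
  rw [ψ_zero j _ h, mul_zero]

lemma scalFn_vanish_nonpos {j m : ℕ} {t : ℝ} (ht : t ≤ 0) : scalFn j m t = 0 := by
  apply scalFn_vanish
  left
  have : (2:ℝ)^m * t ≤ 0 := mul_nonpos_of_nonneg_of_nonpos (by positivity) ht
  linarith

lemma scalFn_vanish_big {j m : ℕ} {t : ℝ} (ht : 7/4 ≤ t) : scalFn j m t = 0 := by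
  apply scalFn_vanish
  right
  have h1 : (1:ℝ) ≤ 2^m := one_le_pow₀ one_le_two
  nlinarith

lemma scalFn_not_vanish {j m : ℕ} {t : ℝ} (h : scalFn j m t ≠ 0) :
    5/4 * ((2:ℝ)^m)⁻¹ < t ∧ t < 7/4 * ((2:ℝ)^m)⁻¹ := by
  have h2m : (0:ℝ) < 2^m := by positivity
  constructor
  · by_contra hcon
    push_neg at hcon
    apply h
    apply scalFn_vanish
    left
    calc (2:ℝ)^m * t ≤ (2:ℝ)^m * (5/4 * ((2:ℝ)^m)⁻¹) := by
          exact mul_le_mul_of_nonneg_left hcon h2m.le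
      _ = 5/4 * ((2:ℝ)^m * ((2:ℝ)^m)⁻¹) := by ring
      _ = 5/4 := by rw [mul_inv_cancel₀ h2m.ne', mul_one]
  · by_contra hcon
    push_neg at hcon
    apply h
    apply scalFn_vanish
    right
    calc (7:ℝ)/4 = 7/4 * ((2:ℝ)^m * ((2:ℝ)^m)⁻¹) := by
          rw [mul_inv_cancel₀ h2m.ne', mul_one]
      _ = (2:ℝ)^m * (7/4 * ((2:ℝ)^m)⁻¹) := by ring
      _ ≤ (2:ℝ)^m * t := mul_le_mul_of_nonneg_left hcon h2m.le

/-- Disjointness of supports: on the window `W_m`, all other rescaled bumps vanish. -/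
lemma scalFn_vanish_of_ne {m i : ℕ} (hne : i ≠ m) {t : ℝ}
    (h1 : 7/8 * ((2:ℝ)^m)⁻¹ < t) (h2 : t < 2 * ((2:ℝ)^m)⁻¹) (j : ℕ) : scalFn j i t = 0 := by
  have h2m : (0:ℝ) < 2^m := by positivity
  have h2i : (0:ℝ) < 2^i := by positivity
  rcases lt_or_gt_of_ne hne with hlt | hgt
  · apply scalFn_vanish
    left
    have hle : (2:ℝ)^(i+1) ≤ 2^m := pow_le_pow_right₀ one_le_two (by omega)
    calc (2:ℝ)^i * t ≤ (2:ℝ)^i * (2 * ((2:ℝ)^m)⁻¹) := mul_le_mul_of_nonneg_left h2.le h2i.le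
      _ = (2:ℝ)^(i+1) * ((2:ℝ)^m)⁻¹ := by rw [pow_succ]; ring
      _ ≤ (2:ℝ)^m * ((2:ℝ)^m)⁻¹ := mul_le_mul_of_nonneg_right hle (by positivity)
      _ = 1 := mul_inv_cancel₀ h2m.ne'
      _ ≤ 5/4 := by norm_num
  · apply scalFn_vanish
    right
    have hle : (2:ℝ)^(m+1) ≤ 2^i := pow_le_pow_right₀ one_le_two (by omega)
    calc (7:ℝ)/4 = (2:ℝ)^(m+1) * (7/8 * ((2:ℝ)^m)⁻¹) := by
          rw [pow_succ]
          field_simp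
          ring
      _ ≤ (2:ℝ)^i * (7/8 * ((2:ℝ)^m)⁻¹) := by
          apply mul_le_mul_of_nonneg_right hle (by positivity)
      _ ≤ (2:ℝ)^i * t := mul_le_mul_of_nonneg_left h1.le h2i.le

/-- Every `t ∈ (0,2)` lies in some window `W_m`. -/
lemma exists_window {t : ℝ} (h0 : 0 < t) (h2 : t < 2) :
    ∃ m : ℕ, 7/8 * ((2:ℝ)^m)⁻¹ < t ∧ t < 2 * ((2:ℝ)^m)⁻¹ := by
  have hex : ∃ m : ℕ, 7/8 * ((2:ℝ)^m)⁻¹ < t := by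
    obtain ⟨n, hn⟩ := pow_unbounded_of_one_lt (7/(8*t)) (one_lt_two (α := ℝ))
    refine ⟨n, ?_⟩
    have h2n : (0:ℝ) < 2^n := by positivity
    have h7 : (7:ℝ) < 2^n * (8*t) := (div_lt_iff₀ (by positivity)).mp hn
    have heq : 7/8 * ((2:ℝ)^n)⁻¹ = 7/(8 * 2^n) := by
      field_simp
    rw [heq, div_lt_iff₀ (by positivity)]
    nlinarith
  refine ⟨Nat.find hex, Nat.find_spec hex, ?_⟩
  set m := Nat.find hex with hm
  rcases Nat.eq_zero_or_pos m with hm0 | hmpos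
  · rw [hm0]
    norm_num
    exact h2
  · have hm' : ¬ (7/8 * ((2:ℝ)^(m-1))⁻¹ < t) := Nat.find_min hex (by omega)
    push_neg at hm'
    have hpow : (2:ℝ)^m = 2^(m-1) * 2 := by
      rw [← pow_succ]
      congr 1
      omega
    have h2m1 : (0:ℝ) < 2^(m-1) := by positivity
    have heq : ((2:ℝ)^(m-1))⁻¹ = 2 * ((2:ℝ)^m)⁻¹ := by
      rw [hpow]
      field_simp
    calc t ≤ 7/8 * ((2:ℝ)^(m-1))⁻¹ := hm'
      _ = 7/4 * ((2:ℝ)^m)⁻¹ := by rw [heq]; ring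
      _ < 2 * ((2:ℝ)^m)⁻¹ := by
          have : (0:ℝ) < ((2:ℝ)^m)⁻¹ := by positivity
          nlinarith

/-- The coefficient sequence controlling smallness. -/
noncomputable def rseq (j : ℕ) : ℕ → ℝ :=
  fun n => Mψ j * ((2:ℝ)^(n*(j+1)) * ((2:ℝ)^(n*n))⁻¹)

lemma rseq_nonneg (j n : ℕ) : 0 ≤ rseq j n := by
  have := Mψ_nonneg j
  unfold rseq
  positivity

lemma rseq_tendsto (j : ℕ) : Tendsto (rseq j) atTop (𝓝 (0:ℝ)) := by
  have hbd : ∀ᶠ n in atTop, rseq j n ≤ Mψ j * ((2:ℝ)⁻¹)^n := by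
    filter_upwards [Filter.eventually_ge_atTop (j+2)] with n hn
    unfold rseq
    have hc : (0:ℝ) < 2^n := by positivity
    have hb : (0:ℝ) < 2^(n*n) := by positivity
    have hle : n * (j+1) + n ≤ n*n := by
      have h1 : n*(j+1) + n = n*(j+2) := by ring
      have h2 : n*(j+2) ≤ n*n := Nat.mul_le_mul_left n hn
      omega
    have h1 : (2:ℝ)^(n*(j+1)) * ((2:ℝ)^(n*n))⁻¹ ≤ ((2:ℝ)^n)⁻¹ := by
      calc (2:ℝ)^(n*(j+1)) * ((2:ℝ)^(n*n))⁻¹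
          ≤ ((2:ℝ)^(n*n) * ((2:ℝ)^n)⁻¹) * ((2:ℝ)^(n*n))⁻¹ := by
            apply mul_le_mul_of_nonneg_right _ (by positivity)
            rw [← div_eq_mul_inv, le_div_iff₀ hc, ← pow_add]
            exact pow_le_pow_right₀ one_le_two hle
        _ = ((2:ℝ)^n)⁻¹ := by
            field_simp
    calc Mψ j * ((2:ℝ)^(n*(j+1)) * ((2:ℝ)^(n*n))⁻¹) ≤ Mψ j * ((2:ℝ)^n)⁻¹ :=
          mul_le_mul_of_nonneg_left h1 (Mψ_nonneg j)
      _ = Mψ j * ((2:ℝ)⁻¹)^n := by rw [inv_pow]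
  apply squeeze_zero' (Filter.Eventually.of_forall (rseq_nonneg j)) hbd
  have := (tendsto_pow_atTop_nhds_zero_of_lt_one (by norm_num : (0:ℝ) ≤ 2⁻¹)
    (by norm_num : (2:ℝ)⁻¹ < 1)).const_mul (Mψ j)
  simpa using this

end BumpMachinery
section DfamMachinery

variable {E : Type*} [AddCommGroup E] [Module ℝ E] [TopologicalSpace E]

/-- The special curve and its formal derivatives. -/
noncomputable def Dfam (x : E) (v : ℕ → E) (j : ℕ) (t : ℝ) : E :=
  (if j = 0 then x else 0) + ∑' m : ℕ, scalFn j m t • v m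

lemma Dfam_of_forall_zero (x : E) (v : ℕ → E) (j : ℕ) {t : ℝ}
    (h : ∀ m, scalFn j m t = 0) : Dfam x v j t = (if j = 0 then x else 0) := by
  unfold Dfam
  have heq : (fun m => scalFn j m t • v m) = fun _ => (0:E) :=
    funext fun m => by rw [h m, zero_smul]
  rw [heq, tsum_zero, add_zero]

lemma Dfam_zero_eval (x : E) (v : ℕ → E) (j : ℕ) :
    Dfam x v j 0 = (if j = 0 then x else 0) :=
  Dfam_of_forall_zero x v j (fun m => scalFn_vanish_nonpos le_rfl)

lemma Dfam_nonpos_eval (x : E) (v : ℕ → E) (j : ℕ) {t : ℝ} (ht : t ≤ 0) :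
    Dfam x v j t = (if j = 0 then x else 0) :=
  Dfam_of_forall_zero x v j (fun m => scalFn_vanish_nonpos ht)

lemma Dfam_big_eval (x : E) (v : ℕ → E) (j : ℕ) {t : ℝ} (ht : 7/4 ≤ t) :
    Dfam x v j t = (if j = 0 then x else 0) :=
  Dfam_of_forall_zero x v j (fun m => scalFn_vanish_big ht)

variable [T2Space E]

lemma Dfam_rep (x : E) (v : ℕ → E) (j m : ℕ) {t : ℝ}
    (h1 : 7/8 * ((2:ℝ)^m)⁻¹ < t) (h2 : t < 2 * ((2:ℝ)^m)⁻¹) :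
    Dfam x v j t = (if j = 0 then x else 0) + scalFn j m t • v m := by
  unfold Dfam
  congr 1
  exact tsum_eq_single m fun i hi => by rw [scalFn_vanish_of_ne hi h1 h2, zero_smul]

/-- Case analysis for points near `0`. -/
lemma Dfam_case (x : E) (v : ℕ → E) (j : ℕ) {t : ℝ} (ht0 : t ≠ 0) (ht1 : |t| < 1) :
    (Dfam x v j t = Dfam x v j 0) ∨
    ∃ m : ℕ, ((2:ℝ)^m)⁻¹ ≤ t ∧
      Dfam x v j t - Dfam x v j 0 = scalFn j m t • v m := by
  rcases lt_or_gt_of_ne ht0 with hneg | hpos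
  · left
    rw [Dfam_nonpos_eval x v j hneg.le, Dfam_zero_eval]
  · have ht2 : t < 2 := by
      have := abs_lt.mp ht1
      linarith
    obtain ⟨m, hm1, hm2⟩ := exists_window hpos ht2
    by_cases hsc : scalFn j m t = 0
    · left
      rw [Dfam_rep x v j m hm1 hm2, hsc, zero_smul, add_zero, Dfam_zero_eval]
    · right
      refine ⟨m, ?_, ?_⟩
      · have h54 := (scalFn_not_vanish hsc).1
        have hpos' : (0:ℝ) < ((2:ℝ)^m)⁻¹ := by positivity
        calc ((2:ℝ)^m)⁻¹ ≤ 5/4 * ((2:ℝ)^m)⁻¹ := by linarith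
          _ ≤ t := h54.le
      · rw [Dfam_rep x v j m hm1 hm2, Dfam_zero_eval, add_sub_cancel_left]

variable [IsTopologicalAddGroup E] [ContinuousSMul ℝ E]

/-- A Mackey-small family: the curve data hypothesis. -/
def MackeySmall (B : Set E) (v : ℕ → E) : Prop :=
  ∀ m : ℕ, ∃ a : ℝ, |a| ≤ ((2:ℝ)^(m*m))⁻¹ ∧ v m ∈ a • B

lemma small_step {B : Set E} {v : ℕ → E} (hvB : MackeySmall B v) (j : ℕ) {m : ℕ} {s : ℝ}
    (hs : |s| ≤ (2:ℝ)^(m*(j+1)) * Mψ j) :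
    ∃ a' : ℝ, |a'| ≤ |rseq j m| ∧ s • v m ∈ a' • B := by
  obtain ⟨a, ha, hv⟩ := hvB m
  refine ⟨s * a, ?_, ?_⟩
  · rw [abs_mul, abs_of_nonneg (rseq_nonneg j m)]
    have h1 : |s| * |a| ≤ ((2:ℝ)^(m*(j+1)) * Mψ j) * ((2:ℝ)^(m*m))⁻¹ :=
      mul_le_mul hs ha (abs_nonneg a) (mul_nonneg (by positivity) (Mψ_nonneg j))
    calc |s| * |a| ≤ ((2:ℝ)^(m*(j+1)) * Mψ j) * ((2:ℝ)^(m*m))⁻¹ := h1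
      _ = rseq j m := by unfold rseq; ring
  · obtain ⟨bb, hbb, hvm⟩ := hv
    rw [← hvm, smul_smul]
    exact smul_mem_smul_set hbb

lemma Dfam_tendsto_at_zero {B : Set E} (hB : IsVonNBounded ℝ B) (hbal : Balanced ℝ B)
    {v : ℕ → E} (hvB : MackeySmall B v) (x : E) (j : ℕ) :
    Tendsto (Dfam x v j) (𝓝[≠] (0:ℝ)) (𝓝 (Dfam x v j 0)) := by
  have key : Tendsto (fun t => Dfam x v j t - Dfam x v j 0) (𝓝[≠] (0:ℝ)) (𝓝 0) := by
    apply tendsto_nhdsWithin_zero_of_small hB hbal (rseq_tendsto j)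
    intro t ht0 ht1
    rcases Dfam_case x v j ht0 ht1 with h | ⟨m, hm1, heq⟩
    · left; rw [h, sub_self]
    · right
      refine ⟨m, ?_, ?_⟩
      · have : (0:ℝ) < t := lt_of_lt_of_le (by positivity) hm1
        rwa [abs_of_pos this]
      · rw [heq]
        apply small_step hvB j
        calc |scalFn j m t| ≤ (2:ℝ)^(m*j) * Mψ j := scalFn_bound j m t
          _ ≤ (2:ℝ)^(m*(j+1)) * Mψ j := by
              apply mul_le_mul_of_nonneg_right _ (Mψ_nonneg j)
              exact pow_le_pow_right₀ one_le_two (Nat.mul_le_mul_left m (by omega))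
  have := key.add_const (Dfam x v j 0)
  simpa using this

lemma Dfam_curveDerivAt_zero {B : Set E} (hB : IsVonNBounded ℝ B) (hbal : Balanced ℝ B)
    {v : ℕ → E} (hvB : MackeySmall B v) (x : E) (j : ℕ) :
    CurveDerivAt (Dfam x v j) (Dfam x v (j+1) 0) 0 := by
  have hD1 : Dfam x v (j+1) 0 = 0 := by
    rw [Dfam_zero_eval]; simp
  show Tendsto (fun h : ℝ => h⁻¹ • (Dfam x v j (0 + h) - Dfam x v j 0)) _ _
  rw [hD1]
  have key : Tendsto (fun h : ℝ => h⁻¹ • (Dfam x v j h - Dfam x v j 0)) (𝓝[≠] (0:ℝ)) (𝓝 0) := by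
    apply tendsto_nhdsWithin_zero_of_small hB hbal (rseq_tendsto j)
    intro t ht0 ht1
    rcases Dfam_case x v j ht0 ht1 with h | ⟨m, hm1, heq⟩
    · left; rw [h, sub_self, smul_zero]
    · right
      have htpos : (0:ℝ) < t := lt_of_lt_of_le (by positivity) hm1
      refine ⟨m, by rwa [abs_of_pos htpos], ?_⟩
      rw [heq, smul_smul]
      apply small_step hvB j
      have hti : t⁻¹ ≤ (2:ℝ)^m := by
        have h1 : (0:ℝ) < ((2:ℝ)^m)⁻¹ := by positivity
        have := inv_anti₀ h1 hm1
        rwa [inv_inv] at this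
      have hti' : |t⁻¹| ≤ (2:ℝ)^m := by
        rw [abs_of_pos (inv_pos.mpr htpos)]
        exact hti
      calc |t⁻¹ * scalFn j m t| = |t⁻¹| * |scalFn j m t| := abs_mul _ _
        _ ≤ (2:ℝ)^m * ((2:ℝ)^(m*j) * Mψ j) := by
            apply mul_le_mul hti' (scalFn_bound j m t) (abs_nonneg _) (by positivity)
        _ = (2:ℝ)^(m*(j+1)) * Mψ j := by
            rw [show m*(j+1) = m + m*j from by ring, pow_add]
            ring
  exact key.congr' (by
    filter_upwards [] with h
    rw [zero_add])

lemma Dfam_continuous {B : Set E} (hB : IsVonNBounded ℝ B) (hbal : Balanced ℝ B)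
    {v : ℕ → E} (hvB : MackeySmall B v) (x : E) (j : ℕ) :
    Continuous (Dfam x v j) := by
  rw [continuous_iff_continuousAt]
  intro t₀
  rcases lt_trichotomy t₀ 0 with hneg | hzero | hpos
  · apply ContinuousAt.congr (continuousAt_const (y := if j = 0 then x else 0))
    filter_upwards [Iio_mem_nhds hneg] with s hs
    exact (Dfam_nonpos_eval x v j (le_of_lt hs)).symm
  · subst hzero
    rw [ContinuousAt, ← nhdsNE_sup_pure]
    rw [tendsto_sup]
    exact ⟨Dfam_tendsto_at_zero hB hbal hvB x j, tendsto_pure_nhds _ 0⟩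
  · rcases lt_or_ge ((7:ℝ)/4) t₀ with hbig | hsmall
    · apply ContinuousAt.congr (continuousAt_const (y := if j = 0 then x else 0))
      filter_upwards [Ioi_mem_nhds hbig] with s hs
      exact (Dfam_big_eval x v j (le_of_lt hs)).symm
    · have ht2 : t₀ < 2 := lt_of_le_of_lt hsmall (by norm_num)
      obtain ⟨m, hm1, hm2⟩ := exists_window hpos ht2
      have hcont : ContinuousAt (fun t => (if j = 0 then x else 0) + scalFn j m t • v m) t₀ :=
        (continuous_const.add ((scalFn_cont j m).smul continuous_const)).continuousAt
      apply hcont.congr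
      filter_upwards [(isOpen_Ioo.mem_nhds ⟨hm1, hm2⟩ :
        Ioo (7/8 * ((2:ℝ)^m)⁻¹) (2 * ((2:ℝ)^m)⁻¹) ∈ 𝓝 t₀)] with s hs
      exact (Dfam_rep x v j m hs.1 hs.2).symm

lemma Dfam_curveDerivAt {B : Set E} (hB : IsVonNBounded ℝ B) (hbal : Balanced ℝ B)
    {v : ℕ → E} (hvB : MackeySmall B v) (x : E) (j : ℕ) (t₀ : ℝ) :
    CurveDerivAt (Dfam x v j) (Dfam x v (j+1) t₀) t₀ := by
  rcases lt_trichotomy t₀ 0 with hneg | hzero | hpos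
  · have hval : Dfam x v (j+1) t₀ = 0 := by
      rw [Dfam_nonpos_eval x v (j+1) hneg.le]; simp
    rw [hval]
    apply curveDerivAt_congr_nhds (c₁ := fun _ => (if j = 0 then x else 0))
    · filter_upwards [Iio_mem_nhds hneg] with s hs
      exact (Dfam_nonpos_eval x v j (le_of_lt hs)).symm
    · exact curveDerivAt_const _ _
  · subst hzero
    exact Dfam_curveDerivAt_zero hB hbal hvB x j
  · rcases lt_or_ge ((7:ℝ)/4) t₀ with hbig | hsmall
    · have hval : Dfam x v (j+1) t₀ = 0 := by
        rw [Dfam_big_eval x v (j+1) hbig.le]; simp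
      rw [hval]
      apply curveDerivAt_congr_nhds (c₁ := fun _ => (if j = 0 then x else 0))
      · filter_upwards [Ioi_mem_nhds hbig] with s hs
        exact (Dfam_big_eval x v j (le_of_lt hs)).symm
      · exact curveDerivAt_const _ _
    · have ht2 : t₀ < 2 := lt_of_le_of_lt hsmall (by norm_num)
      obtain ⟨m, hm1, hm2⟩ := exists_window hpos ht2
      have hval : Dfam x v (j+1) t₀ = scalFn (j+1) m t₀ • v m := by
        rw [Dfam_rep x v (j+1) m hm1 hm2]
        simp
      rw [hval]
      apply curveDerivAt_congr_nhds
        (c₁ := fun s => (if j = 0 then x else 0) + scalFn j m s • v m)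
      · filter_upwards [(isOpen_Ioo.mem_nhds ⟨hm1, hm2⟩ :
          Ioo (7/8 * ((2:ℝ)^m)⁻¹) (2 * ((2:ℝ)^m)⁻¹) ∈ 𝓝 t₀)] with s hs
        exact (Dfam_rep x v j m hs.1 hs.2).symm
      · exact curveDerivAt_const_add_smul (scalFn_hasDerivAt j m t₀) _ _

end DfamMachinery
section MainDirections

variable {E : Type*} [AddCommGroup E] [Module ℝ E] [TopologicalSpace E]
  [IsTopologicalAddGroup E] [ContinuousSMul ℝ E]

/-- Forward direction: if all smooth-curve preimages of `U` are open, then `U` is open for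
Mackey converging sequences. -/
lemma eventually_mem_of_mackeyConv [T2Space E] {U : Set E}
    (hU : ∀ c : ℝ → E, IsSmoothCurve c → IsOpen (c ⁻¹' U)) {x : E} (hx : x ∈ U)
    {y : ℕ → E} (hy : MackeyConvSeq y x) : ∃ N : ℕ, ∀ n ≥ N, y n ∈ U := by
  by_contra hcon
  push_neg at hcon
  obtain ⟨B, ⟨hBconv, hBbal⟩, hBbd, μ, hμ, hyB⟩ := hy
  have hsel : ∀ m : ℕ, ∃ n : ℕ, |μ n| ≤ ((2:ℝ) ^ (m * m))⁻¹ ∧ y n ∉ U := by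
    intro m
    obtain ⟨N, hN⟩ := Metric.tendsto_atTop.mp hμ (((2:ℝ) ^ (m * m))⁻¹) (by positivity)
    obtain ⟨n, hnN, hnU⟩ := hcon N
    refine ⟨n, ?_, hnU⟩
    have := hN n hnN
    rw [Real.dist_eq, sub_zero] at this
    exact this.le
  choose k hk1 hk2 using hsel
  set v : ℕ → E := fun m => y (k m) - x with hv
  have hvB : MackeySmall B v := by
    intro m
    exact ⟨μ (k m), hk1 m, hyB (k m)⟩
  have hsm : IsSmoothCurve (Dfam x v 0) :=
    ⟨Dfam x v, rfl, fun n t => Dfam_curveDerivAt hBbd hBbal hvB x n t,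
      fun n => Dfam_continuous hBbd hBbal hvB x n⟩
  have hopen := hU (Dfam x v 0) hsm
  have h00 : Dfam x v 0 0 = x := by rw [Dfam_zero_eval]; simp
  have hmem : Dfam x v 0 ⁻¹' U ∈ 𝓝 (0:ℝ) := by
    apply hopen.mem_nhds
    show Dfam x v 0 0 ∈ U
    rw [h00]; exact hx
  obtain ⟨ε, hε, hball⟩ := Metric.mem_nhds_iff.mp hmem
  obtain ⟨m, hm⟩ := pow_unbounded_of_one_lt (3/(2*ε)) (one_lt_two (α := ℝ))
  have h2m : (0:ℝ) < 2^m := by positivity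
  set t : ℝ := (3:ℝ)/2 * ((2:ℝ)^m)⁻¹ with htdef
  have htpos : 0 < t := by positivity
  have htlt : t < ε := by
    have h7 : (3:ℝ) < 2^m * (2*ε) := (div_lt_iff₀ (by positivity)).mp hm
    rw [htdef]
    rw [show (3:ℝ)/2 * ((2:ℝ)^m)⁻¹ = 3/(2 * 2^m) from by field_simp]
    rw [div_lt_iff₀ (by positivity)]
    nlinarith
  have htm : t ∈ Metric.ball (0:ℝ) ε := by
    rw [Metric.mem_ball, Real.dist_eq, sub_zero, abs_of_pos htpos]
    exact htlt
  have hin : Dfam x v 0 t ∈ U := hball htm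
  have hW1 : 7/8 * ((2:ℝ)^m)⁻¹ < t := by
    rw [htdef]
    have : (0:ℝ) < ((2:ℝ)^m)⁻¹ := by positivity
    nlinarith
  have hW2 : t < 2 * ((2:ℝ)^m)⁻¹ := by
    rw [htdef]
    have : (0:ℝ) < ((2:ℝ)^m)⁻¹ := by positivity
    nlinarith
  rw [Dfam_rep x v 0 m hW1 hW2] at hin
  have hscal1 : scalFn 0 m t = 1 := by
    show (2:ℝ) ^ (m * 0) * ψFn 0 ((2:ℝ)^m * t) = 1
    have harg : (2:ℝ)^m * t = 3/2 := by
      rw [htdef]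
      field_simp
    rw [harg, Nat.mul_zero, pow_zero, one_mul]
    show iteratedDeriv 0 bumpFn (3/2) = 1
    rw [iteratedDeriv_zero]
    exact bump_one
  rw [hscal1, one_smul, if_pos rfl] at hin
  have : y (k m) ∈ U := by
    have heq : x + v m = y (k m) := by
      show x + (y (k m) - x) = y (k m)
      abel
    rwa [heq] at hin
  exact hk2 m this

/-- Difference quotients of a differentiable curve lie in the closed convex hull of the
derivative image. -/
lemma diffQuotient_mem_closure_convexHull [LocallyConvexSpace ℝ E]
    {c D1 : ℝ → E} (hc : Continuous c) (hd : ∀ t, CurveDerivAt c (D1 t) t)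
    {a b t₁ t₂ : ℝ} (h1 : t₁ ∈ Icc a b) (h2 : t₂ ∈ Icc a b) (hlt : t₁ < t₂) :
    (t₂ - t₁)⁻¹ • (c t₂ - c t₁) ∈ closure (convexHull ℝ (D1 '' Icc a b)) := by
  by_contra hq
  obtain ⟨f, u, hfu, huq⟩ := geometric_hahn_banach_closed_point
    ((convex_convexHull ℝ _).closure) isClosed_closure hq
  have hder : ∀ s : ℝ, HasDerivAt (fun r => f (c r)) (f (D1 s)) s := by
    intro s
    rw [hasDerivAt_iff_tendsto_slope_zero]
    refine ((f.continuous.tendsto (D1 s)).comp (hd s)).congr fun h => ?_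
    simp only [Function.comp_apply, map_smul, map_sub, smul_eq_mul]
  obtain ⟨ξ, hξ, hsl⟩ := exists_hasDerivAt_eq_slope (fun r => f (c r)) (fun s => f (D1 s)) hlt
    ((f.continuous.comp hc).continuousOn) (fun s _ => hder s)
  have hmem : D1 ξ ∈ closure (convexHull ℝ (D1 '' Icc a b)) := by
    apply subset_closure
    apply subset_convexHull
    exact ⟨ξ, ⟨h1.1.trans hξ.1.le, hξ.2.le.trans h2.2⟩, rfl⟩
  have hlt2 : f (D1 ξ) < u := hfu _ hmem
  have heval : f ((t₂ - t₁)⁻¹ • (c t₂ - c t₁)) = (f (c t₂) - f (c t₁)) / (t₂ - t₁) := by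
    rw [map_smul, map_sub, smul_eq_mul, div_eq_inv_mul]
  rw [heval] at huq
  rw [hsl] at hlt2
  linarith

/-- Backward direction: the sequential condition implies openness of smooth-curve preimages. -/
lemma isOpen_preimage_of_seq [LocallyConvexSpace ℝ E] {U : Set E}
    (hU : ∀ x ∈ U, ∀ y : ℕ → E, MackeyConvSeq y x → ∃ N : ℕ, ∀ n ≥ N, y n ∈ U)
    (c : ℝ → E) (hc : IsSmoothCurve c) : IsOpen (c ⁻¹' U) := by
  rw [isOpen_iff_mem_nhds]
  intro t₀ ht₀
  by_contra hmem
  obtain ⟨D, hD0, hDd, hDc⟩ := hc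
  have hccont : Continuous c := hD0 ▸ hDc 0
  have hcd : ∀ t, CurveDerivAt c (D 1 t) t := fun t => hD0 ▸ hDd 0 t
  have hsq : ∀ n : ℕ, ∃ t : ℝ, |t - t₀| < 1/(n+1) ∧ c t ∉ U := by
    intro n
    by_contra h
    push_neg at h
    apply hmem
    rw [Metric.mem_nhds_iff]
    refine ⟨1/(n+1), by positivity, fun s hs => ?_⟩
    rw [Metric.mem_ball, Real.dist_eq] at hs
    exact h s hs
  choose ts hts1 hts2 using hsq
  have htsne : ∀ n, ts n ≠ t₀ := by
    intro n h
    exact hts2 n (h ▸ ht₀)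
  have htsIcc : ∀ n, ts n ∈ Icc (t₀ - 1) (t₀ + 1) := by
    intro n
    have h1 : |ts n - t₀| < 1 := by
      refine lt_of_lt_of_le (hts1 n) ?_
      rw [div_le_one (by positivity)]
      linarith [Nat.cast_nonneg (α := ℝ) n]
    have := abs_lt.mp h1
    constructor <;> linarith [this.1, this.2]
  set J : Set ℝ := Icc (t₀ - 1) (t₀ + 1) with hJ
  have ht₀J : t₀ ∈ J := by
    constructor <;> linarith
  set K : Set E := closure (convexHull ℝ (D 1 '' J)) with hK
  have hKbd : IsVonNBounded ℝ K := by
    have h1 : IsCompact (D 1 '' J) := isCompact_Icc.image (hDc 1)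
    have h2 : IsVonNBounded ℝ (D 1 '' J) := isVonNBounded_of_isCompact h1
    have h3 : IsVonNBounded ℝ (convexHull ℝ (D 1 '' J)) := by
      apply IsVonNBounded.subset _ (vonNBounded_absConvexHull h2)
      exact convexHull_min subset_absConvexHull convex_absConvexHull
    exact vonNBounded_closure h3
  have hDQK : DiffQuotients c J ⊆ K := by
    rintro z ⟨ta, hta, tb, htb, hne, rfl⟩
    rcases lt_or_gt_of_ne hne with hlt | hgt
    · exact diffQuotient_mem_closure_convexHull hccont hcd hta htb hlt
    · have heq : (tb - ta)⁻¹ • (c tb - c ta) = (ta - tb)⁻¹ • (c ta - c tb) := by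
        rw [show tb - ta = -(ta - tb) from by ring, show c tb - c ta = -(c ta - c tb) from by abel,
          inv_neg, neg_smul_neg]
      rw [heq]
      exact diffQuotient_mem_closure_convexHull hccont hcd htb hta hgt
  set B : Set E := absConvexHull ℝ (DiffQuotients c J) with hB
  have hBbd : IsVonNBounded ℝ B := by
    apply IsVonNBounded.subset _ (vonNBounded_absConvexHull hKbd)
    exact absConvexHull_mono hDQK
  have hmc : MackeyConvSeq (fun n => c (ts n)) (c t₀) := by
    refine ⟨B, ⟨convex_absConvexHull, balanced_absConvexHull⟩, hBbd,
      fun n => ts n - t₀, ?_, ?_⟩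
    · apply squeeze_zero_norm (fun n => ?_) tendsto_one_div_add_atTop_nhds_zero_nat
      rw [Real.norm_eq_abs]
      exact (hts1 n).le
    · intro n
      have hne : ts n - t₀ ≠ 0 := sub_ne_zero.mpr (htsne n)
      have hqDQ : (ts n - t₀)⁻¹ • (c (ts n) - c t₀) ∈ DiffQuotients c J :=
        ⟨t₀, ht₀J, ts n, htsIcc n, fun h => htsne n h.symm, rfl⟩
      have heq : c (ts n) - c t₀ = (ts n - t₀) • ((ts n - t₀)⁻¹ • (c (ts n) - c t₀)) :=
        (smul_inv_smul₀ hne _).symm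
      rw [heq]
      exact smul_mem_smul_set (subset_absConvexHull hqDQ)
  obtain ⟨N, hN⟩ := hU (c t₀) ht₀ _ hmc
  exact hts2 N (hN N le_rfl)

end MainDirections
theorem cInf_open_iff {E : Type*} [AddCommGroup E] [Module ℝ E] [TopologicalSpace E]
    [IsTopologicalAddGroup E] [ContinuousSMul ℝ E] [LocallyConvexSpace ℝ E] [T2Space E] (U : Set E) :
    @IsOpen E (cInfTopology E) U ↔
      ∀ x ∈ U, ∀ y : ℕ → E, MackeyConvSeq y x → ∃ N : ℕ, ∀ n ≥ N, y n ∈ U := by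
  rw [isOpen_cInfTopology_iff]
  constructor
  · intro h x hx y hy
    exact eventually_mem_of_mackeyConv h hx hy
  · intro h c hc
    exact isOpen_preimage_of_seq h c hc
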